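/- arXiv:1803.06907 — 4 statements merged into one kernel-verified Lean document; each statement's English description precedes it below -/
import Mathlib

section
/- With the notation of the previous setting, among all probability measures R supported on S = {x1,...,xn} satisfying R(Aj) = P(Aj) for all j = 1,...,m, the measure Q' defined by Q'({x}) = Q({x})·P(Aj)/Q(Aj) for x ∈ Aj minimizes the relative entropy d_K(Q || R); i.e. for every such R, d_K(Q || R) ≥ d_K(Q || Q') = Σ_j Q(Aj) log(Q(Aj)/P(Aj)). -/
open scoped Classical

/-- Log-sum inequality. -/
theorem logsum_aux {𝒳 : Type*} (T : Finset 𝒳) (a b : 𝒳 → ℝ)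
    (ha : ∀ x ∈ T, 0 < a x) (hb : ∀ x ∈ T, 0 < b x)
    (hA : 0 < ∑ x ∈ T, a x) (hB : 0 < ∑ x ∈ T, b x) :
    (∑ x ∈ T, a x) * Real.log ((∑ x ∈ T, a x) / (∑ x ∈ T, b x))
      ≤ ∑ x ∈ T, a x * Real.log (a x / b x) := by
  set A := ∑ x ∈ T, a x with hAdef
  set B := ∑ x ∈ T, b x with hBdef
  have key : ∀ x ∈ T, a x * (Real.log (A / B) - Real.log (a x / b x))
      ≤ b x * (A / B) - a x := by
    intro x hx
    have hax := ha x hx; have hbx := hb x hx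
    have ht : 0 < b x * (A / B) / a x := by positivity
    have h1 : Real.log (b x * (A / B) / a x) ≤ b x * (A / B) / a x - 1 :=
      Real.log_le_sub_one_of_pos ht
    have h2 : Real.log (b x * (A / B) / a x)
        = Real.log (A / B) - Real.log (a x / b x) := by
      rw [Real.log_div (by positivity) hax.ne', Real.log_mul hbx.ne' (by positivity),
        Real.log_div hax.ne' hbx.ne']
      ring
    calc a x * (Real.log (A / B) - Real.log (a x / b x))
        = a x * Real.log (b x * (A / B) / a x) := by rw [h2]
      _ ≤ a x * (b x * (A / B) / a x - 1) := mul_le_mul_of_nonneg_left h1 hax.le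
      _ = b x * (A / B) - a x := by field_simp
  have hsum := Finset.sum_le_sum key
  have e1 : ∑ x ∈ T, (b x * (A / B) - a x) = 0 := by
    rw [Finset.sum_sub_distrib, ← Finset.sum_mul, ← hBdef, ← hAdef]
    field_simp
    ring
  have e2 : ∑ x ∈ T, a x * (Real.log (A / B) - Real.log (a x / b x))
      = A * Real.log (A / B) - ∑ x ∈ T, a x * Real.log (a x / b x) := by
    simp only [mul_sub, Finset.sum_sub_distrib, ← Finset.sum_mul, ← hAdef]
  rw [e1, e2] at hsum
  linarith

/-- Among all probability measures `R` supported on `S` with the margin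
constraints `R(Aj) = P(Aj)`, the raked measure `Q'({x}) = q(x)·P(A_{idx x})/Q(A_{idx x})`
minimizes the relative entropy `d_K(Q || R)`; moreover
`d_K(Q || Q') = Σ_j Q(Aj) log(Q(Aj)/P(Aj))`. -/
theorem raked_measure_minimizes_relative_entropy
    {𝒳 : Type*} {m : ℕ} (S : Finset 𝒳) (q : 𝒳 → ℝ)
    (idx : 𝒳 → Fin m) (pA : Fin m → ℝ)
    (hq : ∀ x ∈ S, 0 < q x) (hqsum : ∑ x ∈ S, q x = 1)
    (hpA : ∀ j, 0 < pA j) (hpAsum : ∑ j, pA j = 1)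
    (hQA : ∀ j : Fin m, 0 < ∑ x ∈ S.filter (fun x => idx x = j), q x)
    (r : 𝒳 → ℝ) (hr : ∀ x ∈ S, 0 < r x) (hrsum : ∑ x ∈ S, r x = 1)
    (hmargins : ∀ j : Fin m, ∑ x ∈ S.filter (fun x => idx x = j), r x = pA j) :
    (∑ x ∈ S, q x *
        Real.log (q x /
          (q x * pA (idx x) / (∑ y ∈ S.filter (fun y => idx y = idx x), q y)))
      = ∑ j : Fin m, (∑ x ∈ S.filter (fun x => idx x = j), q x) *
          Real.log ((∑ x ∈ S.filter (fun x => idx x = j), q x) / pA j))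
    ∧ (∑ j : Fin m, (∑ x ∈ S.filter (fun x => idx x = j), q x) *
          Real.log ((∑ x ∈ S.filter (fun x => idx x = j), q x) / pA j))
        ≤ ∑ x ∈ S, q x * Real.log (q x / r x) := by
  set QA : Fin m → ℝ := fun j => ∑ x ∈ S.filter (fun x => idx x = j), q x with hQAdef
  have fiber : ∀ f : 𝒳 → ℝ, ∑ x ∈ S, f x
      = ∑ j : Fin m, ∑ x ∈ S.filter (fun x => idx x = j), f x := by
    intro f
    exact (Finset.sum_fiberwise_of_maps_to (fun x _ => Finset.mem_univ (idx x)) f).symm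
  constructor
  · have h1 : ∀ x ∈ S, q x *
        Real.log (q x / (q x * pA (idx x) / (∑ y ∈ S.filter (fun y => idx y = idx x), q y)))
        = q x * Real.log (QA (idx x) / pA (idx x)) := by
      intro x hx
      have hqx := hq x hx
      have hQ := hQA (idx x)
      have hp := hpA (idx x)
      congr 1
      congr 1
      rw [hQAdef]
      field_simp
    rw [Finset.sum_congr rfl h1, fiber (fun x => q x * Real.log (QA (idx x) / pA (idx x)))]
    refine Finset.sum_congr rfl fun j _ => ?_
    have h2 : ∀ x ∈ S.filter (fun x => idx x = j),
        q x * Real.log (QA (idx x) / pA (idx x)) = q x * Real.log (QA j / pA j) := by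
      intro x hx
      rw [(Finset.mem_filter.mp hx).2]
    rw [Finset.sum_congr rfl h2, ← Finset.sum_mul]
  · rw [fiber (fun x => q x * Real.log (q x / r x))]
    refine Finset.sum_le_sum fun j _ => ?_
    have := logsum_aux (S.filter (fun x => idx x = j)) q r
      (fun x hx => hq x (Finset.mem_filter.mp hx).1)
      (fun x hx => hr x (Finset.mem_filter.mp hx).1)
      (hQA j) (by rw [hmargins j]; exact hpA j)
    rwa [hmargins j] at this
end

section
/- For the empirical raking-ratio process, the conditional-mixture identity holds: α_n^{(N)}(f) = Σ_{j=1}^{m_N} (P(A_j^{(N)}) / P_n^{(N-1)}(A_j^{(N)})) · α_n^{(N-1)}((f − E(f|A_j^{(N)}))·1_{A_j^{(N)}}), where α_n^{(k)}(f) = √n (P_n^{(k)}(f) − P(f)) and P_n^{(N)}(f) = Σ_j (P(A_j^{(N)})/P_n^{(N-1)}(A_j^{(N)})) P_n^{(N-1)}(f 1_{A_j^{(N)}}). -/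
open MeasureTheory

/-- The conditional-mixture identity for one raking step:
`α_n^{(N)}(f) = Σ_j (P(Aj)/P_n^{(N-1)}(Aj)) · α_n^{(N-1)}((f − E(f|Aj))·1_{Aj})`,
where `μ` plays the role of `P_n^{(N-1)}` and `E(f|A) = P(f·1_A)/P(A)`. -/
theorem raking_ratio_conditional_mixture_identity
    {𝒳 : Type*} [MeasurableSpace 𝒳] (P μ : Measure 𝒳)
    [IsProbabilityMeasure P] [IsFiniteMeasure μ]
    {m : ℕ} (A : Fin m → Set 𝒳)
    (hmeas : ∀ j, MeasurableSet (A j))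
    (hdisj : ∀ i j, i ≠ j → Disjoint (A i) (A j))
    (hcov : (⋃ j, A j) = Set.univ)
    (hP : ∀ j, 0 < P (A j)) (hμ : ∀ j, 0 < μ (A j))
    (n : ℕ) (f : 𝒳 → ℝ) (hf : Measurable f) (M : ℝ) (hbd : ∀ x, |f x| ≤ M) :
    Real.sqrt n *
        ((∑ j : Fin m, (P (A j)).toReal / (μ (A j)).toReal * ∫ x in A j, f x ∂μ)
          - ∫ x, f x ∂P)
      = ∑ j : Fin m, (P (A j)).toReal / (μ (A j)).toReal *
          (Real.sqrt n *
            ((∫ x in A j, (f x - (∫ y in A j, f y ∂P) / (P (A j)).toReal) ∂μ)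
              - ∫ x in A j, (f x - (∫ y in A j, f y ∂P) / (P (A j)).toReal) ∂P)) := by
  have hintP : Integrable f P :=
    (memLp_of_bounded (Filter.Eventually.of_forall fun x => abs_le.mp (hbd x))
      hf.aestronglyMeasurable 1).integrable le_rfl
  have hintμ : Integrable f μ :=
    (memLp_of_bounded (Filter.Eventually.of_forall fun x => abs_le.mp (hbd x))
      hf.aestronglyMeasurable 1).integrable le_rfl
  set c : Fin m → ℝ := fun j => (∫ y in A j, f y ∂P) / (P (A j)).toReal with hc
  have hPne : ∀ j, (P (A j)).toReal ≠ 0 := fun j =>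
    ENNReal.toReal_ne_zero.mpr ⟨(hP j).ne', measure_ne_top _ _⟩
  have hμne : ∀ j, (μ (A j)).toReal ≠ 0 := fun j =>
    ENNReal.toReal_ne_zero.mpr ⟨(hμ j).ne', measure_ne_top _ _⟩
  -- compute the inner integrals
  have hμint : ∀ j, ∫ x in A j, (f x - c j) ∂μ
      = (∫ x in A j, f x ∂μ) - c j * (μ (A j)).toReal := by
    intro j
    rw [integral_sub hintμ.integrableOn (integrable_const _), setIntegral_const,
      smul_eq_mul, measureReal_def]
    ring
  have hPint : ∀ j, ∫ x in A j, (f x - c j) ∂P = 0 := by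
    intro j
    rw [integral_sub hintP.integrableOn (integrable_const _), setIntegral_const, measureReal_def]
    have h1 := hPne j
    have : (P (A j)).toReal • c j = ∫ y in A j, f y ∂P := by
      rw [hc, smul_eq_mul]; field_simp
    rw [this, sub_self]
  have hsum : ∑ j : Fin m, ∫ x in A j, f x ∂P = ∫ x, f x ∂P := by
    rw [← integral_iUnion_fintype hmeas (fun i j hij => hdisj i j hij)
      (fun j => hintP.integrableOn), hcov, Measure.restrict_univ]
  calc Real.sqrt n *
        ((∑ j : Fin m, (P (A j)).toReal / (μ (A j)).toReal * ∫ x in A j, f x ∂μ)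
          - ∫ x, f x ∂P)
      = ∑ j : Fin m, (P (A j)).toReal / (μ (A j)).toReal *
          (Real.sqrt n * ((∫ x in A j, f x ∂μ) - c j * (μ (A j)).toReal - 0)) := by
        rw [← hsum, ← Finset.sum_sub_distrib, Finset.mul_sum]
        refine Finset.sum_congr rfl fun j _ => ?_
        have h1 := hPne j
        have h2 := hμne j
        rw [hc]
        field_simp
        ring
    _ = _ := by
        refine Finset.sum_congr rfl fun j _ => ?_
        rw [hμint j, hPint j]
end

section
/- With the recursive definition G^{(N)}(f) = G^{(N-1)}(f) − Σ_j E(f|A_j^{(N)}) G^{(N-1)}(A_j^{(N)}) and G^{(0)} a linear process, one has the closed form G^{(N)}(f) = G(f) − Σ_{k=1}^N (Φ_k^{(N)}(f))ᵗ · G[A^{(k)}], where Φ_k^{(N)}(f) = E[f|A^{(k)}] + Σ_{1≤L≤N−k, k<l_1<...<l_L≤N} (−1)^L P_{A^{(l_1)}|A^{(k)}} P_{A^{(l_2)}|A^{(l_1)}} ⋯ P_{A^{(l_L)}|A^{(l_{L−1})}} · E[f|A^{(l_L)}]. -/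
open MeasureTheory

/-- The vector `P_{A^{(l_1)}|A^{(k)}} P_{A^{(l_2)}|A^{(l_1)}} ⋯ P_{A^{(l_L)}|A^{(l_{L-1})}}
· E[f|A^{(l_L)}]` along a chain `[l_1,...,l_L]`, with the empty chain giving
`E[f|A^{(k)}]`. -/
noncomputable def chainVec {𝒳 : Type*} [MeasurableSpace 𝒳] (P : Measure 𝒳)
    (m : ℕ → ℕ) (A : (k : ℕ) → Fin (m k) → Set 𝒳) (f : 𝒳 → ℝ) :
    (k : ℕ) → List ℕ → Fin (m k) → ℝ
  | k, [] => fun i => (∫ x in A k i, f x ∂P) / (P (A k i)).toReal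
  | k, l :: rest => fun i =>
      ∑ j : Fin (m l),
        (P (A l j ∩ A k i)).toReal / (P (A k i)).toReal * chainVec P m A f l rest j

lemma sort_insert_max {a : ℕ} {s : Finset ℕ} (h₁ : ∀ b ∈ s, b ≤ a) (h₂ : a ∉ s) :
    (insert a s).sort (· ≤ ·) = s.sort (· ≤ ·) ++ [a] := by
  have hperm : List.Perm ((insert a s).sort (· ≤ ·)) (s.sort (· ≤ ·) ++ [a]) := by
    have h1 : ((insert a s).sort (· ≤ ·) : Multiset ℕ) = ↑(a :: s.sort (· ≤ ·)) := by
      rw [Finset.sort_eq, Finset.insert_val_of_notMem h₂, ← Multiset.cons_coe,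
        Finset.sort_eq]
    exact (Multiset.coe_eq_coe.mp h1).trans (List.perm_append_singleton a _).symm
  have hsorted : List.Pairwise (· ≤ ·) (s.sort (· ≤ ·) ++ [a]) := by
    rw [List.pairwise_append]
    refine ⟨Finset.pairwise_sort _ _, by simp, ?_⟩
    intro x hx y hy
    rw [List.mem_singleton] at hy
    subst hy
    exact h₁ x ((Finset.mem_sort _).mp hx)
  exact List.Perm.eq_of_pairwise' (Finset.pairwise_sort _ _) hsorted hperm

lemma chainVec_append {𝒳 : Type*} [MeasurableSpace 𝒳] (P : Measure 𝒳)
    [IsProbabilityMeasure P]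
    (m : ℕ → ℕ) (A : (k : ℕ) → Fin (m k) → Set 𝒳)
    (hmeas : ∀ k j, MeasurableSet (A k j)) (g : 𝒳 → ℝ) (n : ℕ) :
    ∀ (c : List ℕ) (k : ℕ) (i : Fin (m k)),
      chainVec P m A g k (c ++ [n]) i
        = ∑ j : Fin (m n), ((∫ x in A n j, g x ∂P) / (P (A n j)).toReal) *
            chainVec P m A ((A n j).indicator 1) k c i := by
  intro c
  induction c with
  | nil =>
    intro k i
    simp only [List.nil_append, chainVec]
    refine Finset.sum_congr rfl fun j _ => ?_
    have : ∫ x in A k i, (A n j).indicator (1 : 𝒳 → ℝ) x ∂P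
        = (P (A n j ∩ A k i)).toReal := by
      rw [setIntegral_indicator (hmeas n j), Set.inter_comm]
      simp [measureReal_def]
    rw [this]
    ring
  | cons l rest ih =>
    intro k i
    calc chainVec P m A g k ((l :: rest) ++ [n]) i
        = ∑ j : Fin (m l), ∑ j' : Fin (m n),
            (P (A l j ∩ A k i)).toReal / (P (A k i)).toReal *
              (((∫ x in A n j', g x ∂P) / (P (A n j')).toReal) *
                chainVec P m A ((A n j').indicator 1) l rest j) := by
          simp only [List.cons_append, chainVec, List.append_eq]
          refine Finset.sum_congr rfl fun j _ => ?_
          rw [ih, Finset.mul_sum]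
      _ = ∑ j' : Fin (m n), ∑ j : Fin (m l),
            (P (A l j ∩ A k i)).toReal / (P (A k i)).toReal *
              (((∫ x in A n j', g x ∂P) / (P (A n j')).toReal) *
                chainVec P m A ((A n j').indicator 1) l rest j) := Finset.sum_comm
      _ = ∑ j' : Fin (m n), ((∫ x in A n j', g x ∂P) / (P (A n j')).toReal) *
            chainVec P m A ((A n j').indicator 1) k (l :: rest) i := by
          refine Finset.sum_congr rfl fun j' _ => ?_
          simp only [chainVec, Finset.mul_sum]
          exact Finset.sum_congr rfl fun j _ => by ring

/-- `Φ_k^{(N)}(f) = E[f|A^{(k)}] + Σ_{1≤L≤N−k, k<l_1<...<l_L≤N} (−1)^L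
P_{A^{(l_1)}|A^{(k)}} ⋯ P_{A^{(l_L)}|A^{(l_{L−1})}} · E[f|A^{(l_L)}]`, where the chains
`k < l_1 < ... < l_L ≤ N` are encoded as the nonempty subsets of `{k+1,...,N}`. -/
noncomputable def Phi {𝒳 : Type*} [MeasurableSpace 𝒳] (P : Measure 𝒳)
    (m : ℕ → ℕ) (A : (k : ℕ) → Fin (m k) → Set 𝒳) (f : 𝒳 → ℝ)
    (N k : ℕ) : Fin (m k) → ℝ := fun i =>
  (∫ x in A k i, f x ∂P) / (P (A k i)).toReal +
    ∑ S ∈ (Finset.Icc (k + 1) N).powerset.filter (fun S => S.Nonempty),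
      (-1 : ℝ) ^ S.card * chainVec P m A f k (S.sort (· ≤ ·)) i

lemma Phi_eq {𝒳 : Type*} [MeasurableSpace 𝒳] (P : Measure 𝒳)
    (m : ℕ → ℕ) (A : (k : ℕ) → Fin (m k) → Set 𝒳) (g : 𝒳 → ℝ)
    (N k : ℕ) (i : Fin (m k)) :
    Phi P m A g N k i = ∑ S ∈ (Finset.Icc (k + 1) N).powerset,
      (-1 : ℝ) ^ S.card * chainVec P m A g k (S.sort (· ≤ ·)) i := by
  classical
  rw [← Finset.sum_filter_add_sum_filter_not ((Finset.Icc (k + 1) N).powerset)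
    (fun S => S.Nonempty)]
  have h : ((Finset.Icc (k + 1) N).powerset.filter (fun S => ¬ S.Nonempty))
      = {(∅ : Finset ℕ)} := by
    ext S
    simp only [Finset.mem_filter, Finset.mem_powerset,
      Finset.not_nonempty_iff_eq_empty, Finset.mem_singleton]
    constructor
    · rintro ⟨_, h⟩; exact h
    · rintro rfl; exact ⟨Finset.empty_subset _, rfl⟩
  rw [h, Finset.sum_singleton, Finset.sort_empty]
  simp only [Phi, chainVec, Finset.card_empty, pow_zero, one_mul]
  ring

lemma Phi_top {𝒳 : Type*} [MeasurableSpace 𝒳] (P : Measure 𝒳)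
    (m : ℕ → ℕ) (A : (k : ℕ) → Fin (m k) → Set 𝒳) (g : 𝒳 → ℝ)
    (N : ℕ) (j : Fin (m (N + 1))) :
    Phi P m A g (N + 1) (N + 1) j
      = (∫ x in A (N + 1) j, g x ∂P) / (P (A (N + 1) j)).toReal := by
  have h : Finset.Icc (N + 1 + 1) (N + 1) = ∅ := Finset.Icc_eq_empty (by omega)
  simp [Phi, h, Finset.filter_singleton]

lemma Phi_succ {𝒳 : Type*} [MeasurableSpace 𝒳] (P : Measure 𝒳)
    [IsProbabilityMeasure P]
    (m : ℕ → ℕ) (A : (k : ℕ) → Fin (m k) → Set 𝒳)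
    (hmeas : ∀ k j, MeasurableSet (A k j)) (g : 𝒳 → ℝ)
    (N k : ℕ) (hk : k ≤ N) (i : Fin (m k)) :
    Phi P m A g (N + 1) k i = Phi P m A g N k i -
      ∑ j : Fin (m (N + 1)),
        ((∫ x in A (N + 1) j, g x ∂P) / (P (A (N + 1) j)).toReal) *
          Phi P m A ((A (N + 1) j).indicator 1) N k i := by
  classical
  simp only [Phi_eq]
  rw [← Finset.insert_Icc_right_eq_Icc_add_one (by omega : k + 1 ≤ N + 1)]
  rw [Finset.sum_powerset_insert (by simp : (N + 1) ∉ Finset.Icc (k + 1) N)]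
  have key : ∀ T ∈ (Finset.Icc (k + 1) N).powerset,
      (-1 : ℝ) ^ (insert (N + 1) T).card *
          chainVec P m A g k ((insert (N + 1) T).sort (· ≤ ·)) i
        = -((-1 : ℝ) ^ T.card * ∑ j : Fin (m (N + 1)),
            ((∫ x in A (N + 1) j, g x ∂P) / (P (A (N + 1) j)).toReal) *
              chainVec P m A ((A (N + 1) j).indicator 1) k (T.sort (· ≤ ·)) i) := by
    intro T hT
    have hTsub := Finset.mem_powerset.mp hT
    have hnm : (N + 1) ∉ T := fun h => by
      have := hTsub h; rw [Finset.mem_Icc] at this; omega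
    rw [Finset.card_insert_of_notMem hnm,
      sort_insert_max (fun b hb => by
        have := hTsub hb; rw [Finset.mem_Icc] at this; omega) hnm,
      chainVec_append P m A hmeas g (N + 1) _ k i, pow_succ]
    rw [Finset.mul_sum, Finset.mul_sum, ← Finset.sum_neg_distrib]
    exact Finset.sum_congr rfl fun j _ => by ring
  rw [Finset.sum_congr rfl key]
  have swap : ∑ T ∈ (Finset.Icc (k + 1) N).powerset,
      -((-1 : ℝ) ^ T.card * ∑ j : Fin (m (N + 1)),
          ((∫ x in A (N + 1) j, g x ∂P) / (P (A (N + 1) j)).toReal) *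
            chainVec P m A ((A (N + 1) j).indicator 1) k (T.sort (· ≤ ·)) i)
      = -∑ j : Fin (m (N + 1)),
          ((∫ x in A (N + 1) j, g x ∂P) / (P (A (N + 1) j)).toReal) *
            ∑ T ∈ (Finset.Icc (k + 1) N).powerset,
              (-1 : ℝ) ^ T.card *
                chainVec P m A ((A (N + 1) j).indicator 1) k (T.sort (· ≤ ·)) i := by
    calc ∑ T ∈ (Finset.Icc (k + 1) N).powerset,
        -((-1 : ℝ) ^ T.card * ∑ j : Fin (m (N + 1)),
            ((∫ x in A (N + 1) j, g x ∂P) / (P (A (N + 1) j)).toReal) *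
              chainVec P m A ((A (N + 1) j).indicator 1) k (T.sort (· ≤ ·)) i)
        = ∑ T ∈ (Finset.Icc (k + 1) N).powerset, ∑ j : Fin (m (N + 1)),
            -((-1 : ℝ) ^ T.card *
              (((∫ x in A (N + 1) j, g x ∂P) / (P (A (N + 1) j)).toReal) *
                chainVec P m A ((A (N + 1) j).indicator 1) k (T.sort (· ≤ ·)) i)) := by
          refine Finset.sum_congr rfl fun T _ => ?_
          rw [Finset.mul_sum, ← Finset.sum_neg_distrib]
      _ = ∑ j : Fin (m (N + 1)), ∑ T ∈ (Finset.Icc (k + 1) N).powerset,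
            -((-1 : ℝ) ^ T.card *
              (((∫ x in A (N + 1) j, g x ∂P) / (P (A (N + 1) j)).toReal) *
                chainVec P m A ((A (N + 1) j).indicator 1) k (T.sort (· ≤ ·)) i)) :=
          Finset.sum_comm
      _ = -∑ j : Fin (m (N + 1)),
            ((∫ x in A (N + 1) j, g x ∂P) / (P (A (N + 1) j)).toReal) *
              ∑ T ∈ (Finset.Icc (k + 1) N).powerset,
                (-1 : ℝ) ^ T.card *
                  chainVec P m A ((A (N + 1) j).indicator 1) k (T.sort (· ≤ ·)) i := by
          rw [← Finset.sum_neg_distrib]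
          refine Finset.sum_congr rfl fun j _ => ?_
          rw [Finset.mul_sum, ← Finset.sum_neg_distrib]
          exact Finset.sum_congr rfl fun T _ => by ring
  rw [swap]
  ring

/-- The recursively raked process
`G^{(N)}(f) = G^{(N-1)}(f) − Σ_j E(f|A_j^{(N)}) G^{(N-1)}(1_{A_j^{(N)}})`. -/
noncomputable def rakeG {𝒳 : Type*} [MeasurableSpace 𝒳] (P : Measure 𝒳)
    (m : ℕ → ℕ) (A : (k : ℕ) → Fin (m k) → Set 𝒳)
    (G : (𝒳 → ℝ) → ℝ) : ℕ → (𝒳 → ℝ) → ℝ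
  | 0 => G
  | N + 1 => fun f =>
      rakeG P m A G N f -
        ∑ j : Fin (m (N + 1)),
          ((∫ x in A (N + 1) j, f x ∂P) / (P (A (N + 1) j)).toReal) *
            rakeG P m A G N ((A (N + 1) j).indicator (1 : 𝒳 → ℝ))

lemma rakeG_aux {𝒳 : Type*} [MeasurableSpace 𝒳] (P : Measure 𝒳)
    [IsProbabilityMeasure P]
    (m : ℕ → ℕ) (A : (k : ℕ) → Fin (m k) → Set 𝒳)
    (hmeas : ∀ k j, MeasurableSet (A k j))
    (G : (𝒳 → ℝ) → ℝ) :
    ∀ (N : ℕ) (g : 𝒳 → ℝ),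
      rakeG P m A G N g
        = G g - ∑ k ∈ Finset.Icc 1 N, ∑ i : Fin (m k),
            Phi P m A g N k i * G ((A k i).indicator (1 : 𝒳 → ℝ)) := by
  intro N
  induction N with
  | zero => intro g; simp [rakeG]
  | succ N ih =>
    intro g
    simp only [rakeG, ih]
    rw [← Finset.insert_Icc_right_eq_Icc_add_one (by omega : 1 ≤ N + 1),
      Finset.sum_insert (by simp : N + 1 ∉ Finset.Icc 1 N)]
    have h1 : ∑ i : Fin (m (N + 1)),
        Phi P m A g (N + 1) (N + 1) i * G ((A (N + 1) i).indicator 1)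
        = ∑ j : Fin (m (N + 1)),
            ((∫ x in A (N + 1) j, g x ∂P) / (P (A (N + 1) j)).toReal) *
              G ((A (N + 1) j).indicator 1) :=
      Finset.sum_congr rfl fun j _ => by rw [Phi_top]
    have h2 : ∑ k ∈ Finset.Icc 1 N, ∑ i : Fin (m k),
        Phi P m A g (N + 1) k i * G ((A k i).indicator 1)
        = ∑ k ∈ Finset.Icc 1 N, (∑ i : Fin (m k),
            Phi P m A g N k i * G ((A k i).indicator 1)
          - ∑ j : Fin (m (N + 1)),
              ((∫ x in A (N + 1) j, g x ∂P) / (P (A (N + 1) j)).toReal) *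
                ∑ i : Fin (m k),
                  Phi P m A ((A (N + 1) j).indicator 1) N k i *
                    G ((A k i).indicator 1)) := by
      refine Finset.sum_congr rfl fun k hk => ?_
      have hkN : k ≤ N := (Finset.mem_Icc.mp hk).2
      rw [Finset.sum_congr rfl fun i (_ : i ∈ Finset.univ) => by
        rw [Phi_succ P m A hmeas g N k hkN i]]
      simp only [sub_mul, Finset.sum_sub_distrib, Finset.sum_mul, Finset.mul_sum]
      congr 1
      rw [Finset.sum_comm]
      exact Finset.sum_congr rfl fun j _ => Finset.sum_congr rfl fun i _ =>
        mul_assoc _ _ _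
    rw [h1, h2]
    have h3 : ∑ j : Fin (m (N + 1)),
        ((∫ x in A (N + 1) j, g x ∂P) / (P (A (N + 1) j)).toReal) *
          ∑ k ∈ Finset.Icc 1 N, ∑ i : Fin (m k),
            Phi P m A ((A (N + 1) j).indicator 1) N k i *
              G ((A k i).indicator 1)
        = ∑ k ∈ Finset.Icc 1 N, ∑ j : Fin (m (N + 1)),
            ((∫ x in A (N + 1) j, g x ∂P) / (P (A (N + 1) j)).toReal) *
              ∑ i : Fin (m k),
                Phi P m A ((A (N + 1) j).indicator 1) N k i *
                  G ((A k i).indicator 1) := by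
      simp only [Finset.mul_sum]
      exact Finset.sum_comm
    simp only [mul_sub, Finset.sum_sub_distrib, Finset.sum_sub_distrib]
    rw [h3]
    ring

/-- Closed form of the raked process:
`G^{(N)}(f) = G(f) − Σ_{k=1}^N (Φ_k^{(N)}(f))ᵗ · G[A^{(k)}]` for a linear process `G`. -/
theorem rakeG_closed_form
    {𝒳 : Type*} [MeasurableSpace 𝒳] (P : Measure 𝒳) [IsProbabilityMeasure P]
    (m : ℕ → ℕ) (A : (k : ℕ) → Fin (m k) → Set 𝒳)
    (hmeas : ∀ k j, MeasurableSet (A k j))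
    (hdisj : ∀ k, ∀ i j : Fin (m k), i ≠ j → Disjoint (A k i) (A k j))
    (hcov : ∀ k, (⋃ j, A k j) = Set.univ)
    (hP : ∀ k j, 0 < P (A k j))
    (G : (𝒳 → ℝ) → ℝ)
    (hGadd : ∀ f g : 𝒳 → ℝ, G (f + g) = G f + G g)
    (hGsmul : ∀ (c : ℝ) (f : 𝒳 → ℝ), G (c • f) = c * G f)
    (f : 𝒳 → ℝ) (hf : Integrable f P)
    (N : ℕ) :
    rakeG P m A G N f
      = G f - ∑ k ∈ Finset.Icc 1 N, ∑ i : Fin (m k),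
          Phi P m A f N k i * G ((A k i).indicator (1 : 𝒳 → ℝ)) := by
  exact rakeG_aux P m A hmeas G N f
end

section
/- (Variance reduction.) For every bounded measurable f and every N, V(G^{(N)}(f)) ≤ V(G^{(0)}(f)) = P(f²) − P(f)², since V(G^{(N)}(f)) = V(G(f)) − Σ_{k=1}^N (Φ_k^{(N)}(f))ᵗ · V(G[A^{(k)}]) · Φ_k^{(N)}(f) and each matrix V(G[A^{(k)}]) = diag(P(A^{(k)})) − P(A^{(k)})ᵗP(A^{(k)}) is positive semidefinite. -/
open MeasureTheory

section RakeAux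

variable {𝒳 : Type*} [MeasurableSpace 𝒳]

noncomputable def rakeF (P : Measure 𝒳) (m : ℕ → ℕ) (A : (k : ℕ) → Fin (m k) → Set 𝒳) :
    ℕ → (𝒳 → ℝ) → (𝒳 → ℝ)
  | 0, f => f
  | N + 1, f =>
      rakeF P m A N f -
        ∑ j : Fin (m (N + 1)),
          ((∫ x in A (N + 1) j, f x ∂P) / (P (A (N + 1) j)).toReal) •
            rakeF P m A N ((A (N + 1) j).indicator (1 : 𝒳 → ℝ))

variable (P : Measure 𝒳) (m : ℕ → ℕ) (A : (k : ℕ) → Fin (m k) → Set 𝒳)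

lemma rakeF_succ_def (N : ℕ) (f : 𝒳 → ℝ) :
    rakeF P m A (N + 1) f =
      rakeF P m A N f -
        ∑ j : Fin (m (N + 1)),
          ((∫ x in A (N + 1) j, f x ∂P) / (P (A (N + 1) j)).toReal) •
            rakeF P m A N ((A (N + 1) j).indicator (1 : 𝒳 → ℝ)) := rfl

lemma integrable_of_bdd [IsFiniteMeasure P] {f : 𝒳 → ℝ} (hm : Measurable f)
    (hb : ∃ M, ∀ x, |f x| ≤ M) : Integrable f P := by
  obtain ⟨M, hM⟩ := hb
  exact ⟨hm.aestronglyMeasurable,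
    HasFiniteIntegral.of_bounded (C := M) (ae_of_all _ fun x => by
      simpa [Real.norm_eq_abs] using hM x)⟩

lemma indicator_meas_bdd {k : ℕ} {j : Fin (m k)} (hmeas : MeasurableSet (A k j)) :
    Measurable ((A k j).indicator (1 : 𝒳 → ℝ)) ∧
      ∃ M, ∀ x, |((A k j).indicator (1 : 𝒳 → ℝ)) x| ≤ M := by
  refine ⟨measurable_const.indicator hmeas, 1, fun x => ?_⟩
  by_cases hx : x ∈ A k j <;> simp [Set.indicator_apply, hx]

lemma rakeF_meas_bdd (hmeas : ∀ k j, MeasurableSet (A k j)) :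
    ∀ (N : ℕ) (f : 𝒳 → ℝ), Measurable f → (∃ M, ∀ x, |f x| ≤ M) →
      Measurable (rakeF P m A N f) ∧ ∃ M, ∀ x, |rakeF P m A N f x| ≤ M := by
  intro N
  induction N with
  | zero => intro f hm hb; exact ⟨hm, hb⟩
  | succ N ih =>
    intro f hm hb
    set c : Fin (m (N + 1)) → ℝ :=
      fun j => (∫ x in A (N + 1) j, f x ∂P) / (P (A (N + 1) j)).toReal with hc
    have hR : ∀ j : Fin (m (N + 1)),
        Measurable (rakeF P m A N ((A (N + 1) j).indicator (1 : 𝒳 → ℝ))) ∧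
          ∃ M, ∀ x, |rakeF P m A N ((A (N + 1) j).indicator (1 : 𝒳 → ℝ)) x| ≤ M :=
      fun j => ih _ (indicator_meas_bdd m A (hmeas _ j)).1 (indicator_meas_bdd m A (hmeas _ j)).2
    have hF := ih f hm hb
    have happ : rakeF P m A (N + 1) f = fun x =>
        rakeF P m A N f x - ∑ j : Fin (m (N + 1)),
          c j * rakeF P m A N ((A (N + 1) j).indicator (1 : 𝒳 → ℝ)) x := by
      funext x
      rw [rakeF_succ_def]
      simp [Finset.sum_apply]
      rfl
    rw [happ]
    constructor
    · exact hF.1.sub (Finset.measurable_sum _ fun j _ => (hR j).1.const_mul _)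
    · obtain ⟨M0, hM0⟩ := hF.2
      choose Mj hMj using fun j => (hR j).2
      refine ⟨M0 + ∑ j, |c j| * Mj j, fun x => ?_⟩
      have h1 : |rakeF P m A N f x - ∑ j : Fin (m (N + 1)),
          c j * rakeF P m A N ((A (N + 1) j).indicator (1 : 𝒳 → ℝ)) x|
          ≤ |rakeF P m A N f x| + |∑ j : Fin (m (N + 1)),
            c j * rakeF P m A N ((A (N + 1) j).indicator (1 : 𝒳 → ℝ)) x| := by
        rw [sub_eq_add_neg]
        exact (abs_add_le _ _).trans (by rw [abs_neg])
      refine h1.trans (add_le_add (hM0 x) ?_)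
      refine (Finset.abs_sum_le_sum_abs _ _).trans (Finset.sum_le_sum fun j _ => ?_)
      rw [abs_mul]
      exact mul_le_mul_of_nonneg_left (hMj j x) (abs_nonneg _)

lemma rakeF_smul : ∀ (N : ℕ) (c : ℝ) (f : 𝒳 → ℝ),
    rakeF P m A N (c • f) = c • rakeF P m A N f := by
  intro N
  induction N with
  | zero => intro c f; rfl
  | succ N ih =>
    intro c f
    rw [rakeF_succ_def, rakeF_succ_def, ih, smul_sub, Finset.smul_sum]
    congr 1
    refine Finset.sum_congr rfl fun j _ => ?_
    rw [← mul_smul]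
    congr 1
    have : ∫ x in A (N + 1) j, (c • f) x ∂P = c * ∫ x in A (N + 1) j, f x ∂P := by
      simp_rw [Pi.smul_apply, smul_eq_mul]
      exact integral_const_mul c _
    rw [this, mul_div_assoc]

lemma rakeF_neg (N : ℕ) (f : 𝒳 → ℝ) : rakeF P m A N (-f) = -rakeF P m A N f := by
  have := rakeF_smul P m A N (-1) f
  simpa [neg_one_smul] using this

lemma rakeF_add : ∀ (N : ℕ) (f g : 𝒳 → ℝ), Integrable f P → Integrable g P →
    rakeF P m A N (f + g) = rakeF P m A N f + rakeF P m A N g := by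
  intro N
  induction N with
  | zero => intro f g _ _; rfl
  | succ N ih =>
    intro f g hf hg
    rw [rakeF_succ_def, rakeF_succ_def, rakeF_succ_def, ih f g hf hg]
    have hcoef : ∀ j : Fin (m (N + 1)),
        (∫ x in A (N + 1) j, (f + g) x ∂P) / (P (A (N + 1) j)).toReal =
          (∫ x in A (N + 1) j, f x ∂P) / (P (A (N + 1) j)).toReal +
          (∫ x in A (N + 1) j, g x ∂P) / (P (A (N + 1) j)).toReal := by
      intro j
      rw [← add_div]
      congr 1
      simp_rw [Pi.add_apply]
      exact integral_add hf.integrableOn hg.integrableOn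
    simp_rw [hcoef, add_smul, Finset.sum_add_distrib]
    abel

lemma rakeF_zero_fun (N : ℕ) : rakeF P m A N (0 : 𝒳 → ℝ) = 0 := by
  have := rakeF_smul P m A N 0 0
  simpa using this

lemma rakeF_sub (N : ℕ) (f g : 𝒳 → ℝ) (hf : Integrable f P) (hg : Integrable g P) :
    rakeF P m A N (f - g) = rakeF P m A N f - rakeF P m A N g := by
  rw [sub_eq_add_neg, sub_eq_add_neg, rakeF_add P m A N f (-g) hf hg.neg, rakeF_neg]

lemma rakeF_sum {ι : Type*} (N : ℕ) (s : Finset ι) (g : ι → 𝒳 → ℝ)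
    (hg : ∀ i, Integrable (g i) P) :
    rakeF P m A N (∑ i ∈ s, g i) = ∑ i ∈ s, rakeF P m A N (g i) := by
  classical
  induction s using Finset.induction_on with
  | empty => simpa using rakeF_zero_fun P m A N
  | @insert a s hns ih =>
    have hsum : Integrable (∑ i ∈ s, g i) P := by
      have h2 : (∑ i ∈ s, g i) = fun a => ∑ i ∈ s, g i a := by
        funext a; simp [Finset.sum_apply]
      rw [h2]; exact integrable_finset_sum s (fun i _ => hg i)
    rw [Finset.sum_insert hns, Finset.sum_insert hns,
      rakeF_add P m A N (g a) (∑ i ∈ s, g i) (hg a) hsum, ih]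

lemma rakeF_succ_eq [IsFiniteMeasure P] (hmeas : ∀ k j, MeasurableSet (A k j)) (N : ℕ)
    (f : 𝒳 → ℝ) (hmf : Measurable f) (hbf : ∃ M, ∀ x, |f x| ≤ M) :
    rakeF P m A (N + 1) f =
      rakeF P m A N (f - ∑ j : Fin (m (N + 1)),
        ((∫ x in A (N + 1) j, f x ∂P) / (P (A (N + 1) j)).toReal) •
          (A (N + 1) j).indicator (1 : 𝒳 → ℝ)) := by
  have hintf : Integrable f P := integrable_of_bdd P hmf hbf
  have hind : ∀ j : Fin (m (N + 1)),
      Integrable (((∫ x in A (N + 1) j, f x ∂P) / (P (A (N + 1) j)).toReal) •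
        (A (N + 1) j).indicator (1 : 𝒳 → ℝ)) P := by
    intro j
    exact (((integrable_const (1 : ℝ)).indicator (hmeas _ j))).smul _
  have hsum : Integrable (∑ j : Fin (m (N + 1)),
      ((∫ x in A (N + 1) j, f x ∂P) / (P (A (N + 1) j)).toReal) •
        (A (N + 1) j).indicator (1 : 𝒳 → ℝ)) P := by
    have h2 : (∑ j : Fin (m (N + 1)),
        ((∫ x in A (N + 1) j, f x ∂P) / (P (A (N + 1) j)).toReal) •
          (A (N + 1) j).indicator (1 : 𝒳 → ℝ)) = fun a => ∑ j : Fin (m (N + 1)),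
        (((∫ x in A (N + 1) j, f x ∂P) / (P (A (N + 1) j)).toReal) •
          (A (N + 1) j).indicator (1 : 𝒳 → ℝ)) a := by
      funext a; simp [Finset.sum_apply]
    rw [h2]; exact integrable_finset_sum _ fun j _ => hind j
  rw [rakeF_sub P m A N _ _ hintf hsum,
    rakeF_sum P m A N Finset.univ _ hind, rakeF_succ_def]
  congr 1
  refine Finset.sum_congr rfl fun j _ => ?_
  rw [rakeF_smul]

lemma combo_meas_bdd (hmeas : ∀ k j, MeasurableSet (A k j)) (k : ℕ) (f : 𝒳 → ℝ)
    (hmf : Measurable f) (hbf : ∃ M, ∀ x, |f x| ≤ M) :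
    Measurable (f - ∑ j : Fin (m k), ((∫ y in A k j, f y ∂P) / (P (A k j)).toReal) •
        (A k j).indicator (1 : 𝒳 → ℝ)) ∧
      ∃ M, ∀ x, |(f - ∑ j : Fin (m k), ((∫ y in A k j, f y ∂P) / (P (A k j)).toReal) •
        (A k j).indicator (1 : 𝒳 → ℝ)) x| ≤ M := by
  set c : Fin (m k) → ℝ := fun j => (∫ y in A k j, f y ∂P) / (P (A k j)).toReal with hc
  have happ : (f - ∑ j : Fin (m k), c j • (A k j).indicator (1 : 𝒳 → ℝ)) =
      fun x => f x - ∑ j : Fin (m k), c j * (A k j).indicator (1 : 𝒳 → ℝ) x := by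
    funext x; simp [Finset.sum_apply]
  rw [happ]
  obtain ⟨M0, hM0⟩ := hbf
  constructor
  · exact hmf.sub (Finset.measurable_sum _ fun j _ =>
      (measurable_const.indicator (hmeas k j)).const_mul _)
  · refine ⟨M0 + ∑ j, |c j|, fun x => ?_⟩
    have h1 : |f x - ∑ j : Fin (m k), c j * (A k j).indicator (1 : 𝒳 → ℝ) x|
        ≤ |f x| + |∑ j : Fin (m k), c j * (A k j).indicator (1 : 𝒳 → ℝ) x| := by
      rw [sub_eq_add_neg]
      exact (abs_add_le _ _).trans (by rw [abs_neg])
    refine h1.trans (add_le_add (hM0 x) ?_)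
    refine (Finset.abs_sum_le_sum_abs _ _).trans (Finset.sum_le_sum fun j _ => ?_)
    rw [abs_mul]
    have : |(A k j).indicator (1 : 𝒳 → ℝ) x| ≤ 1 := by
      by_cases hx : x ∈ A k j <;> simp [Set.indicator_apply, hx]
    calc |c j| * |(A k j).indicator (1 : 𝒳 → ℝ) x| ≤ |c j| * 1 :=
          mul_le_mul_of_nonneg_left this (abs_nonneg _)
      _ = |c j| := mul_one _

lemma onestep [IsProbabilityMeasure P]
    (hmeas : ∀ k j, MeasurableSet (A k j))
    (hdisj : ∀ k, ∀ i j : Fin (m k), i ≠ j → Disjoint (A k i) (A k j))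
    (hcov : ∀ k, (⋃ j, A k j) = Set.univ)
    (hP : ∀ k j, 0 < P (A k j))
    (k : ℕ) (f : 𝒳 → ℝ) (hmf : Measurable f) (hbf : ∃ M, ∀ x, |f x| ≤ M) :
    (∫ x, (f - ∑ j : Fin (m k), ((∫ y in A k j, f y ∂P) / (P (A k j)).toReal) •
        (A k j).indicator (1 : 𝒳 → ℝ)) x ^ 2 ∂P)
      - (∫ x, (f - ∑ j : Fin (m k), ((∫ y in A k j, f y ∂P) / (P (A k j)).toReal) •
        (A k j).indicator (1 : 𝒳 → ℝ)) x ∂P) ^ 2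
      ≤ (∫ x, f x ^ 2 ∂P) - (∫ x, f x ∂P) ^ 2 := by
  set q : Fin (m k) → ℝ := fun j => (P (A k j)).toReal with hqdef
  set I : Fin (m k) → ℝ := fun j => ∫ y in A k j, f y ∂P with hIdef
  set c : Fin (m k) → ℝ := fun j => I j / q j with hcdef
  set ind : Fin (m k) → 𝒳 → ℝ := fun j => (A k j).indicator (1 : 𝒳 → ℝ) with hinddef
  have hq : ∀ j, 0 < q j := fun j =>
    ENNReal.toReal_pos (hP k j).ne' (measure_lt_top P _).ne
  have hcq : ∀ j, c j * q j = I j := fun j => div_mul_cancel₀ _ (hq j).ne'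
  -- pointwise representation of weighted indicator sums
  have hrep : ∀ x : 𝒳, ∃ j₀, x ∈ A k j₀ ∧
      ∀ d : Fin (m k) → ℝ, (∑ j, d j * ind j x) = d j₀ := by
    intro x
    have hx : x ∈ ⋃ j, A k j := by rw [hcov k]; trivial
    obtain ⟨j₀, hj₀⟩ := Set.mem_iUnion.mp hx
    refine ⟨j₀, hj₀, fun d => ?_⟩
    rw [Finset.sum_eq_single j₀]
    · rw [hinddef]
      simp [Set.indicator_of_mem hj₀]
    · intro j _ hne
      have hxj : x ∉ A k j := fun hmem =>
        (Set.disjoint_left.mp (hdisj k j j₀ hne) hmem) hj₀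
      rw [hinddef]
      simp [Set.indicator_of_notMem hxj]
    · intro h; exact absurd (Finset.mem_univ j₀) h
  -- integrability facts
  have hIf : Integrable f P := integrable_of_bdd P hmf hbf
  obtain ⟨M, hM⟩ := hbf
  have hmind : ∀ j, Measurable (ind j) := fun j => measurable_const.indicator (hmeas k j)
  have hbind : ∀ j x, |ind j x| ≤ 1 := by
    intro j x
    rw [hinddef]
    by_cases hx : x ∈ A k j <;> simp [Set.indicator_apply, hx]
  have hmh : Measurable (fun x => ∑ j, c j * ind j x) :=
    Finset.measurable_sum _ fun j _ => (hmind j).const_mul _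
  have hbh : ∀ x, |∑ j, c j * ind j x| ≤ ∑ j, |c j| := by
    intro x
    refine (Finset.abs_sum_le_sum_abs _ _).trans (Finset.sum_le_sum fun j _ => ?_)
    rw [abs_mul]
    calc |c j| * |ind j x| ≤ |c j| * 1 := mul_le_mul_of_nonneg_left (hbind j x) (abs_nonneg _)
      _ = |c j| := mul_one _
  have hIh : Integrable (fun x => ∑ j, c j * ind j x) P :=
    integrable_of_bdd P hmh ⟨_, hbh⟩
  have hIf2 : Integrable (fun x => f x ^ 2) P := by
    refine integrable_of_bdd P (hmf.pow_const 2) ⟨M ^ 2, fun x => ?_⟩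
    rw [abs_pow]
    exact pow_le_pow_left₀ (abs_nonneg _) (hM x) 2
  have hIfh : Integrable (fun x => f x * ∑ j, c j * ind j x) P := by
    refine integrable_of_bdd P (hmf.mul hmh) ⟨M * ∑ j, |c j|, fun x => ?_⟩
    rw [abs_mul]
    exact mul_le_mul (hM x) (hbh x) (abs_nonneg _) ((abs_nonneg _).trans (hM x))
  have hIind : ∀ j, Integrable (fun x => ind j x) P := fun j =>
    integrable_of_bdd P (hmind j) ⟨1, hbind j⟩
  -- basic integrals
  have hinds : ∀ j, ∫ x, ind j x ∂P = q j := by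
    intro j
    rw [hinddef]
    simpa [Measure.real, q, Pi.one_def] using integral_indicator_const (1 : ℝ) (hmeas k j)
  have hfind : ∀ j, ∫ x, f x * ind j x ∂P = I j := by
    intro j
    have hpt : ∀ x, f x * ind j x = (A k j).indicator f x := by
      intro x
      rw [hinddef]
      by_cases hx : x ∈ A k j <;> simp [Set.indicator_apply, hx]
    simp_rw [hpt]
    rw [integral_indicator (hmeas k j)]
  have hIsum : ∑ j, I j = ∫ x, f x ∂P := by
    have hiu := integral_iUnion (μ := P) (fun j => hmeas k j)
      (fun i j hij => hdisj k i j hij) hIf.integrableOn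
    rw [hcov k, Measure.restrict_univ, tsum_fintype] at hiu
    exact hiu.symm
  have hinth : ∫ x, (∑ j, c j * ind j x) ∂P = ∑ j, c j * q j := by
    rw [integral_finset_sum _ fun j _ => (hIind j).const_mul _]
    exact Finset.sum_congr rfl fun j _ => by rw [integral_const_mul, hinds]
  -- the centered function has mean zero
  have happ : ∀ x, (f - ∑ j : Fin (m k), c j • ind j) x = f x - ∑ j, c j * ind j x := by
    intro x; simp [Finset.sum_apply]
  have hg_int : ∫ x, (f - ∑ j : Fin (m k), c j • ind j) x ∂P = 0 := by
    simp_rw [happ]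
    rw [integral_sub hIf hIh, hinth]
    have : ∑ j, c j * q j = ∑ j, I j := Finset.sum_congr rfl fun j _ => hcq j
    rw [this, hIsum, sub_self]
  -- second moment of the centered function
  have hfh : ∫ x, f x * (∑ j, c j * ind j x) ∂P = ∑ j, c j ^ 2 * q j := by
    have hpt : ∀ x, f x * (∑ j, c j * ind j x) = ∑ j, c j * (f x * ind j x) := by
      intro x
      rw [Finset.mul_sum]
      exact Finset.sum_congr rfl fun j _ => by ring
    have hIfind : ∀ j, Integrable (fun x => c j * (f x * ind j x)) P := by
      intro j
      refine integrable_of_bdd P ((hmf.mul (hmind j)).const_mul _) ⟨|c j| * M, fun x => ?_⟩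
      rw [abs_mul]
      refine mul_le_mul_of_nonneg_left ?_ (abs_nonneg _)
      rw [abs_mul]
      calc |f x| * |ind j x| ≤ M * 1 :=
            mul_le_mul (hM x) (hbind j x) (abs_nonneg _) ((abs_nonneg _).trans (hM x))
        _ = M := mul_one M
    simp_rw [hpt]
    rw [integral_finset_sum _ fun j _ => hIfind j]
    refine Finset.sum_congr rfl fun j _ => ?_
    rw [integral_const_mul, hfind, ← hcq j]
    ring
  have hh2 : ∫ x, (∑ j, c j * ind j x) ^ 2 ∂P = ∑ j, c j ^ 2 * q j := by
    have hpt : ∀ x, (∑ j, c j * ind j x) ^ 2 = ∑ j, c j ^ 2 * ind j x := by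
      intro x
      obtain ⟨j₀, _, hd⟩ := hrep x
      rw [hd (fun j => c j), hd (fun j => c j ^ 2)]
    simp_rw [hpt]
    rw [integral_finset_sum _ fun j _ => (hIind j).const_mul _]
    exact Finset.sum_congr rfl fun j _ => by rw [integral_const_mul, hinds]
  have hg2 : ∫ x, (f - ∑ j : Fin (m k), c j • ind j) x ^ 2 ∂P
      = (∫ x, f x ^ 2 ∂P) - ∑ j, c j ^ 2 * q j := by
    have hpt : ∀ x, (f - ∑ j : Fin (m k), c j • ind j) x ^ 2 =
        f x ^ 2 - 2 * (f x * ∑ j, c j * ind j x) + (∑ j, c j * ind j x) ^ 2 := by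
      intro x; rw [happ]; ring
    simp_rw [hpt]
    rw [integral_add (by exact hIf2.sub (hIfh.const_mul 2)) (by
      refine integrable_of_bdd P (hmh.pow_const 2) ⟨(∑ j, |c j|) ^ 2, fun x => ?_⟩
      rw [abs_pow]
      exact pow_le_pow_left₀ (abs_nonneg _) (hbh x) 2),
      integral_sub hIf2 (hIfh.const_mul 2), integral_const_mul, hfh, hh2]
    ring
  -- the Cauchy–Schwarz step
  have hsumq : ∑ j, q j = 1 := by
    have h1 : ∫ x, (∑ j, (1 : ℝ) * ind j x) ∂P = ∑ j, (1 : ℝ) * q j := by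
      rw [integral_finset_sum _ fun j _ => (hIind j).const_mul _]
      exact Finset.sum_congr rfl fun j _ => by rw [integral_const_mul, hinds]
    have h2 : ∀ x : 𝒳, (∑ j, (1 : ℝ) * ind j x) = 1 := by
      intro x
      obtain ⟨j₀, _, hd⟩ := hrep x
      exact hd (fun _ => (1 : ℝ))
    simp_rw [h2] at h1
    simp at h1
    simpa using h1.symm
  have hCS : (∑ j, c j * q j) ^ 2 ≤ ∑ j, c j ^ 2 * q j := by
    have := Finset.sum_mul_sq_le_sq_mul_sq Finset.univ
      (fun j => c j * Real.sqrt (q j)) (fun j => Real.sqrt (q j))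
    have e1 : ∀ j : Fin (m k), c j * Real.sqrt (q j) * Real.sqrt (q j) = c j * q j := by
      intro j
      rw [mul_assoc, Real.mul_self_sqrt (hq j).le]
    have e2 : ∀ j : Fin (m k), (c j * Real.sqrt (q j)) ^ 2 = c j ^ 2 * q j := by
      intro j
      rw [mul_pow, Real.sq_sqrt (hq j).le]
    have e3 : ∀ j : Fin (m k), Real.sqrt (q j) ^ 2 = q j := fun j => Real.sq_sqrt (hq j).le
    simp_rw [e1, e2, e3] at this
    rw [hsumq, mul_one] at this
    exact this
  -- conclusion
  have hintf_eq : ∫ x, f x ∂P = ∑ j, c j * q j := by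
    rw [← hIsum]
    exact Finset.sum_congr rfl fun j _ => (hcq j).symm
  rw [hg_int, hg2, hintf_eq]
  nlinarith [hCS]

lemma rakeF_key [IsProbabilityMeasure P]
    (hmeas : ∀ k j, MeasurableSet (A k j))
    (hdisj : ∀ k, ∀ i j : Fin (m k), i ≠ j → Disjoint (A k i) (A k j))
    (hcov : ∀ k, (⋃ j, A k j) = Set.univ)
    (hP : ∀ k j, 0 < P (A k j)) :
    ∀ (N : ℕ) (f : 𝒳 → ℝ), Measurable f → (∃ M, ∀ x, |f x| ≤ M) →
      (∫ x, rakeF P m A N f x ^ 2 ∂P) - (∫ x, rakeF P m A N f x ∂P) ^ 2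
        ≤ (∫ x, f x ^ 2 ∂P) - (∫ x, f x ∂P) ^ 2 := by
  intro N
  induction N with
  | zero => intro f _ _; exact le_rfl
  | succ N ih =>
    intro f hmf hbf
    rw [rakeF_succ_eq P m A hmeas N f hmf hbf]
    obtain ⟨hgm, hgb⟩ := combo_meas_bdd P m A hmeas (N + 1) f hmf hbf
    exact (ih _ hgm hgb).trans (onestep P m A hmeas hdisj hcov hP (N + 1) f hmf hbf)

lemma rakeG_eq_rakeF {Ω : Type*} (G : (𝒳 → ℝ) → Ω → ℝ)
    (hGadd : ∀ (f g : 𝒳 → ℝ) (ω : Ω), G (f + g) ω = G f ω + G g ω)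
    (hGsmul : ∀ (c : ℝ) (f : 𝒳 → ℝ) (ω : Ω), G (c • f) ω = c * G f ω) :
    ∀ (N : ℕ) (f : 𝒳 → ℝ) (ω : Ω),
      rakeG P m A (fun h => G h ω) N f = G (rakeF P m A N f) ω := by
  have hG0 : ∀ ω : Ω, G 0 ω = 0 := by
    intro ω
    have := hGsmul 0 0 ω
    simpa using this
  have hGsub : ∀ (f g : 𝒳 → ℝ) (ω : Ω), G (f - g) ω = G f ω - G g ω := by
    intro f g ω
    have h1 := hGsmul (-1) g ω
    rw [neg_one_smul] at h1
    rw [sub_eq_add_neg, hGadd, h1]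
    ring
  have hGsum : ∀ {ι : Type} (s : Finset ι) (u : ι → 𝒳 → ℝ) (ω : Ω),
      G (∑ i ∈ s, u i) ω = ∑ i ∈ s, G (u i) ω := by
    intro ι s u ω
    classical
    induction s using Finset.induction_on with
    | empty => simpa using hG0 ω
    | @insert a s hns ihs =>
      rw [Finset.sum_insert hns, Finset.sum_insert hns, hGadd, ihs]
  intro N
  induction N with
  | zero => intro f ω; rfl
  | succ N ih =>
    intro f ω
    show (rakeG P m A (fun h => G h ω) N f - ∑ j : Fin (m (N + 1)),
        ((∫ x in A (N + 1) j, f x ∂P) / (P (A (N + 1) j)).toReal) *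
          rakeG P m A (fun h => G h ω) N ((A (N + 1) j).indicator (1 : 𝒳 → ℝ))) = _
    rw [rakeF_succ_def, hGsub, hGsum, ih f ω]
    congr 1
    refine Finset.sum_congr rfl fun j _ => ?_
    rw [hGsmul, ih]

end RakeAux

/-- Variance reduction: for every bounded measurable `f` and every `N`,
`V(G^{(N)}(f)) ≤ V(G^{(0)}(f)) = P(f²) − P(f)²`. -/
theorem rakeG_variance_reduction
    {𝒳 Ω : Type*} [MeasurableSpace 𝒳] [MeasurableSpace Ω]
    (P : Measure 𝒳) (μ : Measure Ω)
    [IsProbabilityMeasure P] [IsProbabilityMeasure μ]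
    (m : ℕ → ℕ) (A : (k : ℕ) → Fin (m k) → Set 𝒳)
    (hmeas : ∀ k j, MeasurableSet (A k j))
    (hdisj : ∀ k, ∀ i j : Fin (m k), i ≠ j → Disjoint (A k i) (A k j))
    (hcov : ∀ k, (⋃ j, A k j) = Set.univ)
    (hP : ∀ k j, 0 < P (A k j))
    (G : (𝒳 → ℝ) → Ω → ℝ)
    (hGadd : ∀ (f g : 𝒳 → ℝ) (ω : Ω), G (f + g) ω = G f ω + G g ω)
    (hGsmul : ∀ (c : ℝ) (f : 𝒳 → ℝ) (ω : Ω), G (c • f) ω = c * G f ω)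
    (hGcent : ∀ f : 𝒳 → ℝ, ∫ ω, G f ω ∂μ = 0)
    (hGint : ∀ f g : 𝒳 → ℝ, Integrable (fun ω => G f ω * G g ω) μ)
    (hGcov : ∀ f g : 𝒳 → ℝ, Measurable f → Measurable g →
      (∃ M, ∀ x, |f x| ≤ M) → (∃ M, ∀ x, |g x| ≤ M) →
      ∫ ω, G f ω * G g ω ∂μ
        = (∫ x, f x * g x ∂P) - (∫ x, f x ∂P) * (∫ x, g x ∂P))
    (N : ℕ) (f : 𝒳 → ℝ)
    (hmf : Measurable f) (hbf : ∃ M, ∀ x, |f x| ≤ M) :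
    (∫ ω, (rakeG P m A (fun h => G h ω) N f) ^ 2 ∂μ ≤ ∫ ω, (G f ω) ^ 2 ∂μ)
      ∧ ∫ ω, (G f ω) ^ 2 ∂μ = (∫ x, f x ^ 2 ∂P) - (∫ x, f x ∂P) ^ 2 := by
  have hsq : ∀ u : 𝒳 → ℝ, Measurable u → (∃ M, ∀ x, |u x| ≤ M) →
      ∫ ω, (G u ω) ^ 2 ∂μ = (∫ x, u x ^ 2 ∂P) - (∫ x, u x ∂P) ^ 2 := by
    intro u hmu hbu
    have h := hGcov u u hmu hmu hbu hbu
    simp_rw [← pow_two] at h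
    exact h
  constructor
  · have hrm := rakeF_meas_bdd P m A hmeas N f hmf hbf
    have h1 : ∀ ω, rakeG P m A (fun h => G h ω) N f = G (rakeF P m A N f) ω :=
      fun ω => rakeG_eq_rakeF P m A G hGadd hGsmul N f ω
    calc ∫ ω, (rakeG P m A (fun h => G h ω) N f) ^ 2 ∂μ
        = ∫ ω, (G (rakeF P m A N f) ω) ^ 2 ∂μ := by simp_rw [h1]
      _ = (∫ x, rakeF P m A N f x ^ 2 ∂P) - (∫ x, rakeF P m A N f x ∂P) ^ 2 :=
          hsq _ hrm.1 hrm.2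
      _ ≤ (∫ x, f x ^ 2 ∂P) - (∫ x, f x ∂P) ^ 2 :=
          rakeF_key P m A hmeas hdisj hcov hP N f hmf hbf
      _ = ∫ ω, (G f ω) ^ 2 ∂μ := (hsq f hmf hbf).symm
  · exact hsq f hmf hbf
end
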